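/- arXiv:2104.15055 — 2 statements merged into one kernel-verified Lean document; each statement's English description precedes it below -/
import Mathlib

section
/- Let L1 and L2 be two sequences of q uniformly random, pairwise-distinct elements of {0,1}^n (sampled uniformly from all injective sequences), sampled independently. Let Y be the maximum, over all a ∈ {0,1}^n, of the number of pairs (h1, h2) ∈ L1 × L2 with h1 ⊕ h2 = a. Then Pr[Y > k] <= q^{2k} · 2^n · (2^n - k)! / (k! · (2^n)!). -/
instance (n : ℕ) : Fintype (BitVec n) :=
  Fintype.ofEquiv (Fin (2 ^ n))
    ⟨BitVec.ofFin, BitVec.toFin, fun _ => rfl, fun _ => rfl⟩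

lemma bv_xor_lcancel {n : ℕ} {x y z : BitVec n} (h : x ^^^ y = x ^^^ z) : y = z := by
  have := congrArg (x ^^^ ·) h
  simpa [← BitVec.xor_assoc] using this

lemma bv_card (n : ℕ) : Fintype.card (BitVec n) = 2 ^ n := by
  rw [Fintype.card_congr (⟨BitVec.toFin, BitVec.ofFin, fun _ => rfl, fun _ => rfl⟩ :
    BitVec n ≃ Fin (2 ^ n)), Fintype.card_fin]

lemma aux_card_compl_range {α β : Type*} [Fintype α] [Fintype β] [DecidableEq β]
    {f : α → β} (hf : Function.Injective f) :
    Fintype.card {y : β // y ∉ Set.range f} = Fintype.card β - Fintype.card α := by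
  classical
  rw [Fintype.card_subtype_compl]
  congr 1
  exact (Fintype.card_congr (Equiv.ofInjective f hf)).symm

lemma card_Inj (n q : ℕ) :
    Fintype.card {f : Fin q → BitVec n // Function.Injective f} =
      (2 ^ n).descFactorial q := by
  rw [Fintype.card_congr (Equiv.subtypeInjectiveEquivEmbedding (Fin q) (BitVec n)),
    Fintype.card_embedding_eq, bv_card, Fintype.card_fin]

lemma fiber_bound (n q k : ℕ) (a : BitVec n) (iE jE : Fin k ↪ Fin q) :
    Fintype.card {p : {f : Fin q → BitVec n // Function.Injective f} ×
                      {f : Fin q → BitVec n // Function.Injective f} //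
        ∀ s, p.1.1 (iE s) ^^^ p.2.1 (jE s) = a}
      ≤ (2 ^ n).descFactorial q * (2 ^ n - k).descFactorial (q - k) := by
  classical
  set Inj := {f : Fin q → BitVec n // Function.Injective f} with hInj
  have hr : ∀ (f : Inj) (g : Inj), (∀ s, f.1 (iE s) ^^^ g.1 (jE s) = a) →
      ∀ s, g.1 (jE s) = a ^^^ f.1 (iE s) := by
    intro f g hp s
    apply bv_xor_lcancel (x := f.1 (iE s))
    rw [hp s, BitVec.xor_comm a, ← BitVec.xor_assoc, BitVec.xor_self, BitVec.zero_xor]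
  have hvinj : ∀ f : Inj, Function.Injective (fun s => a ^^^ f.1 (iE s)) := by
    intro f s s' h
    exact iE.injective (f.2 (bv_xor_lcancel h))
  have key : ∀ f : Inj,
      Fintype.card ({x : Fin q // x ∉ Set.range ⇑jE} ↪
        {y : BitVec n // y ∉ Set.range (fun s => a ^^^ f.1 (iE s))}) =
      (2 ^ n - k).descFactorial (q - k) := by
    intro f
    rw [Fintype.card_embedding_eq, aux_card_compl_range (hvinj f),
      aux_card_compl_range jE.injective, bv_card, Fintype.card_fin, Fintype.card_fin]
  let Φ : {p : Inj × Inj // ∀ s, p.1.1 (iE s) ^^^ p.2.1 (jE s) = a} →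
      ((f : Inj) × ({x : Fin q // x ∉ Set.range ⇑jE} ↪
        {y : BitVec n // y ∉ Set.range (fun s => a ^^^ f.1 (iE s))})) :=
    fun p => ⟨p.1.1, ⟨fun x => ⟨p.1.2.1 x.1, by
        rintro ⟨s, hs⟩
        have hs' : a ^^^ p.1.1.1 (iE s) = p.1.2.1 x.1 := hs
        have hgx : p.1.2.1 x.1 = p.1.2.1 (jE s) :=
          hs'.symm.trans (hr p.1.1 p.1.2 p.2 s).symm
        exact x.2 ⟨s, (p.1.2.2 hgx).symm⟩⟩,
      fun x x' hxx => Subtype.ext (p.1.2.2 (congrArg Subtype.val hxx))⟩⟩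
  have hΦ : Function.Injective Φ := by
    rintro ⟨⟨f, g⟩, hp⟩ ⟨⟨f', g'⟩, hp'⟩ h
    simp only [Φ] at h
    obtain ⟨h1, h2⟩ := Sigma.mk.inj_iff.mp h
    subst h1
    replace h2 := eq_of_heq h2
    refine Subtype.ext (Prod.ext rfl ?_)
    refine Subtype.ext (funext fun x => ?_)
    by_cases hx : x ∈ Set.range ⇑jE
    · obtain ⟨s, rfl⟩ := hx
      rw [hr f g hp s, hr f g' hp' s]
    · exact congrArg Subtype.val (DFunLike.congr_fun h2 ⟨x, hx⟩)
  refine le_trans (Fintype.card_le_of_injective Φ hΦ) (le_of_eq ?_)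
  rw [Fintype.card_sigma]
  rw [Finset.sum_congr rfl fun f _ => key f, Finset.sum_const, Finset.card_univ,
    card_Inj, smul_eq_mul]

lemma bv_eq_xor {n : ℕ} {x y a : BitVec n} (h : x ^^^ y = a) : y = x ^^^ a := by
  subst h; simp [← BitVec.xor_assoc]

lemma bv_eq_xor' {n : ℕ} {x y a : BitVec n} (h : x ^^^ y = a) : x = a ^^^ y := by
  subst h; simp [BitVec.xor_assoc]

/-- Lemma 2 of the paper: for two independent uniformly random injective
`q`-element sequences `L1, L2` of `n`-bit strings, the maximum over
`a ∈ {0,1}^n` of the number of pairs `(h1, h2) ∈ L1 × L2` with `h1 ⊕ h2 = a`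
exceeds `k` with probability at most `q^{2k}·2^n·(2^n-k)!/(k!·(2^n)!)`.
Probability is modelled as counting over the uniform distribution on pairs of
injective sequences. -/
theorem stmt_10 (n q k : ℕ) (hn : 0 < n) (hq : 0 < q) (hk : 0 < k)
    (hk2 : k ≤ 2 ^ n) (hq2 : q ≤ 2 ^ n) :
    ((Finset.univ.filter
        (fun p : {f : Fin q → BitVec n // Function.Injective f} ×
                 {f : Fin q → BitVec n // Function.Injective f} =>
          k < Finset.univ.sup (fun a : BitVec n =>
            (Finset.univ.filter
              (fun ij : Fin q × Fin q => p.1.1 ij.1 ^^^ p.2.1 ij.2 = a)).card))).card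
        : ℝ) /
      (Fintype.card ({f : Fin q → BitVec n // Function.Injective f} ×
                     {f : Fin q → BitVec n // Function.Injective f}))
    ≤ (q : ℝ) ^ (2 * k) * 2 ^ n * (Nat.factorial (2 ^ n - k)) /
        (Nat.factorial k * Nat.factorial (2 ^ n)) := by
  classical
  set S := Finset.univ.filter
        (fun p : {f : Fin q → BitVec n // Function.Injective f} ×
                 {f : Fin q → BitVec n // Function.Injective f} =>
          k < Finset.univ.sup (fun a : BitVec n =>
            (Finset.univ.filter
              (fun ij : Fin q × Fin q => p.1.1 ij.1 ^^^ p.2.1 ij.2 = a)).card)) with hS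
  have hM1pos : 0 < (2 ^ n).descFactorial q := by
    rcases Nat.eq_zero_or_pos ((2 ^ n).descFactorial q) with h | h
    · rw [Nat.descFactorial_eq_zero_iff_lt] at h; omega
    · exact h
  -- key natural number inequality
  have key : S.card * (k.factorial * (2 ^ n).factorial) ≤
      q ^ (2 * k) * 2 ^ n * (2 ^ n - k).factorial *
        ((2 ^ n).descFactorial q * (2 ^ n).descFactorial q) := by
    by_cases hkq : k ≤ q
    · -- double counting
      have hcount : S.card * (k.factorial) ≤
          (Fintype.card (BitVec n × (Fin k ↪ Fin q) × (Fin k ↪ Fin q))) *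
            ((2 ^ n).descFactorial q * (2 ^ n - k).descFactorial (q - k)) := by
        have hdc := Finset.card_mul_le_card_mul
          (r := fun (p : {f : Fin q → BitVec n // Function.Injective f} ×
                        {f : Fin q → BitVec n // Function.Injective f})
                  (t : BitVec n × (Fin k ↪ Fin q) × (Fin k ↪ Fin q)) =>
              ∀ s : Fin k, p.1.1 (t.2.1 s) ^^^ p.2.1 (t.2.2 s) = t.1)
          (s := S) (t := Finset.univ)
          (m := k.factorial)
          (n := (2 ^ n).descFactorial q * (2 ^ n - k).descFactorial (q - k))
          ?_ ?_
        · simpa [Finset.card_univ] using hdc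
        · -- each bad p has at least k! witnesses above
          intro p hp
          have hY := (Finset.mem_filter.mp hp).2
          rw [Finset.lt_sup_iff] at hY
          obtain ⟨a, -, ha⟩ := hY
          obtain ⟨Q, hQsub, hQcard⟩ := Finset.exists_subset_card_eq ha.le
          let e : Fin k ≃ {x // x ∈ Q} := (Q.equivFin.trans (finCongr hQcard)).symm
          let i : Fin k → Fin q := fun s => ((e s : Fin q × Fin q)).1
          let j : Fin k → Fin q := fun s => ((e s : Fin q × Fin q)).2
          have hkey : ∀ s, p.1.1 (i s) ^^^ p.2.1 (j s) = a := fun s =>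
            (Finset.mem_filter.mp (hQsub (e s).2)).2
          have hgj : ∀ s, p.2.1 (j s) = p.1.1 (i s) ^^^ a := fun s => bv_eq_xor (hkey s)
          have hfi : ∀ s, p.1.1 (i s) = a ^^^ p.2.1 (j s) := fun s => bv_eq_xor' (hkey s)
          have hpair : ∀ s s', (i s = i s' ∨ j s = j s') → s = s' := by
            intro s s' hss
            have h1 : i s = i s' ∧ j s = j s' := by
              rcases hss with h | h
              · refine ⟨h, p.2.2 ?_⟩
                rw [hgj s, hgj s', h]
              · refine ⟨p.1.2 ?_, h⟩
                rw [hfi s, hfi s', h]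
            exact e.injective (Subtype.ext (Prod.ext h1.1 h1.2))
          have hi : Function.Injective i := fun s s' h => hpair s s' (Or.inl h)
          have hj : Function.Injective j := fun s s' h => hpair s s' (Or.inr h)
          have hk' : (Finset.univ : Finset (Equiv.Perm (Fin k))).card = k.factorial := by
            rw [Finset.card_univ, Fintype.card_perm, Fintype.card_fin]
          rw [← hk']
          apply Finset.card_le_card_of_injOn
            (fun σ : Equiv.Perm (Fin k) =>
              (a, σ.toEmbedding.trans ⟨i, hi⟩, σ.toEmbedding.trans ⟨j, hj⟩))
          · intro σ _
            rw [Finset.mem_coe, Finset.mem_bipartiteAbove]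
            exact ⟨Finset.mem_univ _, fun s => hkey (σ s)⟩
          · intro σ _ σ' _ h
            have h2 : σ.toEmbedding.trans ⟨i, hi⟩ = σ'.toEmbedding.trans ⟨i, hi⟩ :=
              congrArg (fun t : BitVec n × (Fin k ↪ Fin q) × (Fin k ↪ Fin q) => t.2.1) h
            exact Equiv.ext fun s => hi (DFunLike.congr_fun h2 s)
        · -- each triple has few p's below
          intro t _
          refine le_trans (Finset.card_le_card (fun p hp => ?_))
            (le_trans (le_of_eq (Fintype.card_subtype
              (fun p : {f : Fin q → BitVec n // Function.Injective f} ×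
                       {f : Fin q → BitVec n // Function.Injective f} =>
                ∀ s : Fin k, p.1.1 (t.2.1 s) ^^^ p.2.1 (t.2.2 s) = t.1)).symm)
              (fiber_bound n q k t.1 t.2.1 t.2.2))
          rw [Finset.mem_bipartiteBelow] at hp
          exact Finset.mem_filter.mpr ⟨Finset.mem_univ _, hp.2⟩
      -- now arithmetic
      have hcardTrip : Fintype.card (BitVec n × (Fin k ↪ Fin q) × (Fin k ↪ Fin q)) =
          2 ^ n * (q.descFactorial k * q.descFactorial k) := by
        rw [Fintype.card_prod, Fintype.card_prod, Fintype.card_embedding_eq,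
          Fintype.card_fin, Fintype.card_fin]
        rw [show Fintype.card (BitVec n) = 2 ^ n from by
          rw [Fintype.card_congr (⟨BitVec.toFin, BitVec.ofFin, fun _ => rfl, fun _ => rfl⟩ :
            BitVec n ≃ Fin (2 ^ n)), Fintype.card_fin]]
      rw [hcardTrip] at hcount
      have hfac1 : (2 ^ n - q).factorial * (2 ^ n).descFactorial q = (2 ^ n).factorial :=
        Nat.factorial_mul_descFactorial hq2
      have hfac2 : (2 ^ n - q).factorial * (2 ^ n - k).descFactorial (q - k) =
          (2 ^ n - k).factorial := by
        have h := Nat.factorial_mul_descFactorial (show q - k ≤ 2 ^ n - k by omega)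
        rwa [show 2 ^ n - k - (q - k) = 2 ^ n - q by omega] at h
      have hD : q.descFactorial k * q.descFactorial k ≤ q ^ (2 * k) := by
        calc q.descFactorial k * q.descFactorial k ≤ q ^ k * q ^ k :=
              Nat.mul_le_mul (Nat.descFactorial_le_pow q k) (Nat.descFactorial_le_pow q k)
          _ = q ^ (2 * k) := by rw [← pow_add, two_mul]
      calc S.card * (k.factorial * (2 ^ n).factorial)
          = (S.card * k.factorial) * (2 ^ n).factorial := by ring
        _ ≤ (2 ^ n * (q.descFactorial k * q.descFactorial k) *
              ((2 ^ n).descFactorial q * (2 ^ n - k).descFactorial (q - k))) *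
              (2 ^ n).factorial := Nat.mul_le_mul_right _ hcount
        _ = (q.descFactorial k * q.descFactorial k) *
              (2 ^ n * (2 ^ n - k).factorial *
                ((2 ^ n).descFactorial q * (2 ^ n).descFactorial q)) := by
            rw [← hfac1, ← hfac2]; ring
        _ ≤ q ^ (2 * k) *
              (2 ^ n * (2 ^ n - k).factorial *
                ((2 ^ n).descFactorial q * (2 ^ n).descFactorial q)) :=
            Nat.mul_le_mul_right _ hD
        _ = q ^ (2 * k) * 2 ^ n * (2 ^ n - k).factorial *
              ((2 ^ n).descFactorial q * (2 ^ n).descFactorial q) := by ring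
    · -- k > q : the bad set is empty
      have hSempty : S = ∅ := by
        rw [hS, Finset.filter_eq_empty_iff]
        intro p _
        simp only [not_lt]
        apply Finset.sup_le
        intro a _
        have hle : (Finset.univ.filter
            (fun ij : Fin q × Fin q => p.1.1 ij.1 ^^^ p.2.1 ij.2 = a)).card ≤ q := by
          have h := Finset.card_le_card_of_injOn (fun ij : Fin q × Fin q => ij.1)
            (fun ij _ => Finset.mem_univ ij.1) (t := (Finset.univ : Finset (Fin q)))
            (s := Finset.univ.filter
              (fun ij : Fin q × Fin q => p.1.1 ij.1 ^^^ p.2.1 ij.2 = a)) ?_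
          · simpa [Finset.card_univ] using h
          · intro x hx y hy hxy
            simp only [Finset.coe_filter, Set.mem_setOf_eq] at hx hy
            have hxy' : x.1 = y.1 := hxy
            have hgg : p.2.1 x.2 = p.2.1 y.2 := by
              rw [bv_eq_xor hx.2, bv_eq_xor hy.2, hxy']
            exact Prod.ext hxy' (p.2.2 hgg)
        omega
      rw [hSempty]
      simp
  -- conclude over the reals
  have hcardP : Fintype.card ({f : Fin q → BitVec n // Function.Injective f} ×
      {f : Fin q → BitVec n // Function.Injective f}) =
      (2 ^ n).descFactorial q * (2 ^ n).descFactorial q := by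
    rw [Fintype.card_prod, card_Inj]
  rw [hcardP]
  rw [div_le_div_iff₀ (by exact_mod_cast Nat.mul_pos hM1pos hM1pos)
    (by exact_mod_cast Nat.mul_pos (Nat.factorial_pos k) (Nat.factorial_pos (2 ^ n)))]
  have keyR := (Nat.cast_le (α := ℝ)).mpr key
  push_cast at keyR ⊢
  linarith [keyR]
end

section
/- In the ABR mode tree of height ℓ modeled with ideal compression functions, any collision between two distinct messages implies a proper internal collision: there exists a node (j,b) and two distinct input pairs (u,v) ≠ (u',v') queried to f_{(j,b)}, together with feed-forward values h, h' in the yield set of the right child, such that f_{(j,b)}(u,v) ⊕ h = f_{(j,b)}(u',v') ⊕ h'. -/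
/-- The chaining value computed at node `(j, b)` of the ABR tree of height
`ℓ`, with compression-function family `f`, leaf message blocks `Mleaf`
(block `i` for `i ∈ {1,…,2^ℓ}`) and internal-node message blocks `Mint`.
Level `1` holds the leaves; an internal node `(j, b)` with `j ≥ 2` computes
`f (j,b) (m ⊕ y_left) (m ⊕ y_right) ⊕ y_right`. -/
def abrNode {n : ℕ} (f : ℕ × ℕ → BitVec n → BitVec n → BitVec n)
    (Mleaf : ℕ → BitVec n) (Mint : ℕ × ℕ → BitVec n) : ℕ → ℕ → BitVec n
  | 0, _ => 0
  | 1, b => f (1, b) (Mleaf (2 * b - 1)) (Mleaf (2 * b))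
  | (j + 2), b =>
      f (j + 2, b)
        (Mint (j + 2, b) ^^^ abrNode f Mleaf Mint (j + 1) (2 * b - 1))
        (Mint (j + 2, b) ^^^ abrNode f Mleaf Mint (j + 1) (2 * b)) ^^^
        abrNode f Mleaf Mint (j + 1) (2 * b)

lemma bv_xor_left_cancel {n : ℕ} {a b c : BitVec n} (h : a ^^^ b = a ^^^ c) : b = c := by
  have := congrArg (a ^^^ ·) h
  simpa [← BitVec.xor_assoc] using this

lemma bv_xor_right_cancel {n : ℕ} {a b c : BitVec n} (h : b ^^^ a = c ^^^ a) : b = c := by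
  have := congrArg (· ^^^ a) h
  simpa [BitVec.xor_assoc] using this

lemma abr_aux {n : ℕ} (ℓ : ℕ)
    (f : ℕ × ℕ → BitVec n → BitVec n → BitVec n)
    (Mleaf Mleaf' : ℕ → BitVec n) (Mint Mint' : ℕ × ℕ → BitVec n)
    (hleaf : ∀ b, 1 ≤ b → b ≤ 2 ^ (ℓ - 1) →
      f (1, b) (Mleaf (2 * b - 1)) (Mleaf (2 * b)) =
        f (1, b) (Mleaf' (2 * b - 1)) (Mleaf' (2 * b)) →
      Mleaf (2 * b - 1) = Mleaf' (2 * b - 1) ∧ Mleaf (2 * b) = Mleaf' (2 * b)) :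
    ∀ j, 1 ≤ j → j ≤ ℓ → ∀ b, 1 ≤ b → b ≤ 2 ^ (ℓ - j) →
    ((∃ i, 2 ^ j * (b - 1) < i ∧ i ≤ 2 ^ j * b ∧ Mleaf i ≠ Mleaf' i) ∨
     (∃ j' b', 2 ≤ j' ∧ j' ≤ j ∧ 2 ^ (j - j') * (b - 1) < b' ∧
        b' ≤ 2 ^ (j - j') * b ∧ Mint (j', b') ≠ Mint' (j', b'))) →
    abrNode f Mleaf Mint j b = abrNode f Mleaf' Mint' j b →
    ∃ j b, 2 ≤ j ∧ j ≤ ℓ ∧ 1 ≤ b ∧ b ≤ 2 ^ (ℓ - j) ∧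
      (Mint (j, b) ^^^ abrNode f Mleaf Mint (j - 1) (2 * b - 1),
        Mint (j, b) ^^^ abrNode f Mleaf Mint (j - 1) (2 * b)) ≠
      (Mint' (j, b) ^^^ abrNode f Mleaf' Mint' (j - 1) (2 * b - 1),
        Mint' (j, b) ^^^ abrNode f Mleaf' Mint' (j - 1) (2 * b)) ∧
      f (j, b) (Mint (j, b) ^^^ abrNode f Mleaf Mint (j - 1) (2 * b - 1))
          (Mint (j, b) ^^^ abrNode f Mleaf Mint (j - 1) (2 * b)) ^^^
        abrNode f Mleaf Mint (j - 1) (2 * b) =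
      f (j, b) (Mint' (j, b) ^^^ abrNode f Mleaf' Mint' (j - 1) (2 * b - 1))
          (Mint' (j, b) ^^^ abrNode f Mleaf' Mint' (j - 1) (2 * b)) ^^^
        abrNode f Mleaf' Mint' (j - 1) (2 * b) := by
  intro j
  induction j with
  | zero => omega
  | succ j ih =>
    intro _ hjl b hb1 hb2 hd heq
    match j, ih with
    | 0, _ =>
      -- level 1
      simp only [abrNode] at heq
      have := hleaf b hb1 hb2 heq
      rcases hd with ⟨i, hi1, hi2, hne⟩ | ⟨j', b', hj1, hj2, _⟩
      · have : i = 2 * b - 1 ∨ i = 2 * b := by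
          have e1 : (2:ℕ)^(0+1) = 2 := by norm_num
          rw [e1] at hi1 hi2; omega
        rcases this with rfl | rfl
        · exact absurd ‹_ ∧ _›.1 hne
        · exact absurd ‹_ ∧ _›.2 hne
      · omega
    | (k + 1), ih =>
      -- level k+2
      set yL := abrNode f Mleaf Mint (k + 1) (2 * b - 1) with hyL
      set yR := abrNode f Mleaf Mint (k + 1) (2 * b) with hyR
      set yL' := abrNode f Mleaf' Mint' (k + 1) (2 * b - 1) with hyL'
      set yR' := abrNode f Mleaf' Mint' (k + 1) (2 * b) with hyR'
      set m := Mint (k + 2, b) with hm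
      set m' := Mint' (k + 2, b) with hm'
      have hb2' : b ≤ 2 ^ (ℓ - (k + 2)) := hb2
      have heq2 : f (k + 2, b) (m ^^^ yL) (m ^^^ yR) ^^^ yR
          = f (k + 2, b) (m' ^^^ yL') (m' ^^^ yR') ^^^ yR' := heq
      by_cases hin : (m ^^^ yL, m ^^^ yR) = (m' ^^^ yL', m' ^^^ yR')
      · -- inputs equal; cancel
        have e1 : m ^^^ yL = m' ^^^ yL' := congrArg Prod.fst hin
        have e2 : m ^^^ yR = m' ^^^ yR' := congrArg Prod.snd hin
        have hfeq : f (k + 2, b) (m ^^^ yL) (m ^^^ yR)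
            = f (k + 2, b) (m' ^^^ yL') (m' ^^^ yR') := by rw [e1, e2]
        have hyReq : yR = yR' := by
          rw [hfeq] at heq2; exact bv_xor_left_cancel heq2
        have hmeq : m = m' := by
          rw [hyReq] at e2; exact bv_xor_right_cancel e2
        have hyLeq : yL = yL' := by
          rw [hmeq] at e1; exact bv_xor_left_cancel e1
        have hbnd : 2 * b ≤ 2 ^ (ℓ - (k + 1)) := by
          have : 2 ^ (ℓ - (k + 1)) = 2 * 2 ^ (ℓ - (k + 2)) := by
            rw [show ℓ - (k + 1) = (ℓ - (k + 2)) + 1 by omega, pow_succ]; ring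
          omega
        -- decompose the difference
        rcases hd with ⟨i, hi1, hi2, hne⟩ | ⟨j', b', hj1, hj2, hb'1, hb'2, hne⟩
        · have hi1' : 2 ^ (k + 2) * (b - 1) < i := hi1
          have hi2' : i ≤ 2 ^ (k + 2) * b := hi2
          have hA : 2 ^ (k + 1) * (2 * b - 1 - 1) = 2 ^ (k + 2) * (b - 1) := by
            rw [show 2 * b - 1 - 1 = 2 * (b - 1) by omega, pow_succ]; ring
          have hB : 2 ^ (k + 1) * (2 * b) = 2 ^ (k + 2) * b := by
            rw [pow_succ]; ring
          by_cases hside : i ≤ 2 ^ (k + 1) * (2 * b - 1)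
          · exact ih (by omega) (by omega) (2 * b - 1) (by omega) (by omega)
              (Or.inl ⟨i, by omega, hside, hne⟩) hyLeq
          · exact ih (by omega) (by omega) (2 * b) (by omega) hbnd
              (Or.inl ⟨i, by omega, by omega, hne⟩) (hyReq)
        · by_cases hjtop : j' = k + 2
          · subst hjtop
            have : b' = b := by
              simp only [Nat.sub_self, pow_zero, one_mul] at hb'1 hb'2; omega
            subst this
            exact absurd hmeq hne
          · have hj2' : j' ≤ k + 1 := by omega
            have hq : (2 : ℕ) ^ (k + 2 - j') = 2 * 2 ^ (k + 1 - j') := by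
              rw [show k + 2 - j' = (k + 1 - j') + 1 by omega, pow_succ]; ring
            have hb'1' : 2 ^ (k + 2 - j') * (b - 1) < b' := hb'1
            have hb'2' : b' ≤ 2 ^ (k + 2 - j') * b := hb'2
            rw [hq] at hb'1' hb'2'
            have hA : 2 ^ (k + 1 - j') * (2 * b - 1 - 1) = 2 * 2 ^ (k + 1 - j') * (b - 1) := by
              rw [show 2 * b - 1 - 1 = 2 * (b - 1) by omega]; ring
            have hB : 2 ^ (k + 1 - j') * (2 * b) = 2 * 2 ^ (k + 1 - j') * b := by ring
            by_cases hside : b' ≤ 2 ^ (k + 1 - j') * (2 * b - 1)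
            · exact ih (by omega) (by omega) (2 * b - 1) (by omega) (by omega)
                (Or.inr ⟨j', b', hj1, hj2', by omega, hside, hne⟩) hyLeq
            · exact ih (by omega) (by omega) (2 * b) (by omega) hbnd
                (Or.inr ⟨j', b', hj1, hj2', by omega, by omega, hne⟩) hyReq
      · exact ⟨k + 2, b, by omega, by omega, hb1, hb2, hin, heq2⟩

/-- Lemma 3 of the paper: a collision in the ABR mode implies a proper
internal collision.  If two messages agree nowhere... precisely: if the two
messages differ in some block used by the tree, produce the same root hash,
and there is no collision at the leaf level, then there is a node `(j, b)`
with `2 ≤ j ≤ ℓ` at which the two computations query the compression function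
`f (j,b)` on distinct input pairs `(u, v) ≠ (u', v')` while the outputs,
feed-forwarded with the respective right-child chaining values `h, h'`,
collide: `f (j,b) u v ⊕ h = f (j,b) u' v' ⊕ h'`. -/
theorem stmt_15 {n : ℕ} (ℓ : ℕ) (hℓ : 2 ≤ ℓ)
    (f : ℕ × ℕ → BitVec n → BitVec n → BitVec n)
    (Mleaf Mleaf' : ℕ → BitVec n) (Mint Mint' : ℕ × ℕ → BitVec n)
    -- the two messages are distinct (they differ in a block used by the tree)
    (hdist :
      (∃ i, 1 ≤ i ∧ i ≤ 2 ^ ℓ ∧ Mleaf i ≠ Mleaf' i) ∨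
      (∃ j b, 2 ≤ j ∧ j ≤ ℓ ∧ 1 ≤ b ∧ b ≤ 2 ^ (ℓ - j) ∧
        Mint (j, b) ≠ Mint' (j, b)))
    -- no collision at the leaf level
    (hleaf : ∀ b, 1 ≤ b → b ≤ 2 ^ (ℓ - 1) →
      f (1, b) (Mleaf (2 * b - 1)) (Mleaf (2 * b)) =
        f (1, b) (Mleaf' (2 * b - 1)) (Mleaf' (2 * b)) →
      Mleaf (2 * b - 1) = Mleaf' (2 * b - 1) ∧ Mleaf (2 * b) = Mleaf' (2 * b))
    -- collision at the root
    (hcoll : abrNode f Mleaf Mint ℓ 1 = abrNode f Mleaf' Mint' ℓ 1) :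
    ∃ j b, 2 ≤ j ∧ j ≤ ℓ ∧ 1 ≤ b ∧ b ≤ 2 ^ (ℓ - j) ∧
      (Mint (j, b) ^^^ abrNode f Mleaf Mint (j - 1) (2 * b - 1),
        Mint (j, b) ^^^ abrNode f Mleaf Mint (j - 1) (2 * b)) ≠
      (Mint' (j, b) ^^^ abrNode f Mleaf' Mint' (j - 1) (2 * b - 1),
        Mint' (j, b) ^^^ abrNode f Mleaf' Mint' (j - 1) (2 * b)) ∧
      f (j, b) (Mint (j, b) ^^^ abrNode f Mleaf Mint (j - 1) (2 * b - 1))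
          (Mint (j, b) ^^^ abrNode f Mleaf Mint (j - 1) (2 * b)) ^^^
        abrNode f Mleaf Mint (j - 1) (2 * b) =
      f (j, b) (Mint' (j, b) ^^^ abrNode f Mleaf' Mint' (j - 1) (2 * b - 1))
          (Mint' (j, b) ^^^ abrNode f Mleaf' Mint' (j - 1) (2 * b)) ^^^
        abrNode f Mleaf' Mint' (j - 1) (2 * b) := by
  refine abr_aux ℓ f Mleaf Mleaf' Mint Mint' hleaf ℓ (by omega) le_rfl 1 le_rfl
    (by simp) ?_ hcoll
  rcases hdist with ⟨i, h1, h2, hne⟩ | ⟨j, b, h1, h2, h3, h4, hne⟩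
  · exact Or.inl ⟨i, by omega, by omega, hne⟩
  · exact Or.inr ⟨j, b, h1, h2, by omega, by omega, hne⟩
end
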